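/- Let q_o > q_s > 0, γ_o > 0, γ_s > 0, η = γ_o + γ_s, and suppose condition C1 holds: η q_s/(2 q_o) < γ_o < η/2. Let p_o* = 2 γ_o γ_s q_o (q_o − q_s)/(4 γ_o γ_s q_o − η² q_s). Then the aggregate customers' utility of the on-demand service at equilibrium satisfies ∫_{θ_1}^{1} γ_o (θ q_o − p_o*) dθ = q_o γ_o γ_s (2 γ_o q_o − η q_s) · (γ_o q_s (γ_s − γ_o) + 2 γ_o γ_s (q_o + q_s) − η² q_s) / (2 (4 γ_o γ_s q_o − η² q_s)²), where θ_1 = (2 γ_o γ_s q_o − η γ_o q_s)/(4 γ_o γ_s q_o − η² q_s) is the equilibrium on-demand threshold. -/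

import Mathlib

open intervalIntegral

/-- Under C1, with
`p_o* = 2 γ_o γ_s q_o (q_o − q_s)/(4 γ_o γ_s q_o − η² q_s)` and equilibrium
on-demand threshold `θ₁ = (2 γ_o γ_s q_o − η γ_o q_s)/(4 γ_o γ_s q_o − η² q_s)`,
the aggregate on-demand customers' utility satisfies
`∫_{θ₁}^{1} γ_o (θ q_o − p_o*) dθ = q_o γ_o γ_s (2 γ_o q_o − η q_s) ·
 (γ_o q_s (γ_s − γ_o) + 2 γ_o γ_s (q_o + q_s) − η² q_s) / (2 (4 γ_o γ_s q_o − η² q_s)²)`. -/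
theorem aggregate_on_demand_utility
    (qo qs γo γs η po θ₁ : ℝ)
    (hq : qo > qs) (hqs : qs > 0)
    (hγo : 0 < γo) (hγs : 0 < γs)
    (hη : η = γo + γs)
    (hC1l : η * qs / (2 * qo) < γo) (hC1r : γo < η / 2)
    (hpo : po = 2 * γo * γs * qo * (qo - qs) / (4 * γo * γs * qo - η ^ 2 * qs))
    (hθ₁ : θ₁ = (2 * γo * γs * qo - η * γo * qs) / (4 * γo * γs * qo - η ^ 2 * qs)) :
    ∫ θ in θ₁..1, γo * (θ * qo - po) =
      qo * γo * γs * (2 * γo * qo - η * qs) *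
        ((γo * qs * (γs - γo) + 2 * γo * γs * (qo + qs) - η ^ 2 * qs) /
          (2 * (4 * γo * γs * qo - η ^ 2 * qs) ^ 2)) := by
  have hqo : (0:ℝ) < qo := lt_trans hqs hq
  have hD : 4 * γo * γs * qo - η ^ 2 * qs ≠ 0 := by
    have h1 : η * qs < 2 * γo * qo := by
      rw [div_lt_iff₀ (by positivity)] at hC1l
      linarith
    have h2 : γo < γs := by rw [hη] at hC1r; linarith
    have hηpos : 0 < η := by rw [hη]; positivity
    nlinarith [mul_pos hηpos (mul_pos hγo hqo)]
  have h1 : ∀ θ : ℝ, γo * (θ * qo - po) = γo * qo * θ - γo * po := fun θ => by ring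
  simp_rw [h1]
  rw [intervalIntegral.integral_sub (intervalIntegrable_id.const_mul _)
    intervalIntegrable_const,
    intervalIntegral.integral_const_mul, intervalIntegral.integral_const, integral_id,
    smul_eq_mul]
  subst hpo hθ₁ hη
  have hD' : γo * qo * γs * 4 - (γo + γs) ^ 2 * qs ≠ 0 := by
    rw [show γo * qo * γs * 4 = 4 * γo * γs * qo by ring]; exact hD
  field_simp
  ring
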